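/- (Lemma 6.) Let Θ ⊂ ℝ^p be a nonempty compact convex set and (Ω, 𝓕, P) a probability space. For each n, let 𝓛_n : Ω × Θ → ℝ be such that for every ω the map θ ↦ 𝓛_n(ω,θ) is continuously differentiable on an open convex set containing Θ, and for every θ the random variable 𝓛_n(·,θ) is integrable; set D_n(ω,θ) := 𝓛_n(ω,θ) − E[𝓛_n(·,θ)]. Assume (a) M_n(ω) := sup_{θ∈Θ} max_{1≤i≤p} |∂D_n/∂θ_i(ω,θ)| satisfies lim_{M→∞} limsup_{n→∞} P(M_n > M) = 0, and (b) for every θ ∈ Θ, D_n(·,θ) → 0 in probability as n → ∞. Then sup_{θ∈Θ} |D_n(·,θ)| → 0 in probability as n → ∞. -/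

import Mathlib

open MeasureTheory Filter
open scoped Topology ENNReal

lemma euclid_coord_abs_le {p : ℕ} (v : EuclideanSpace ℝ (Fin p)) (i : Fin p) :
    |v i| ≤ ‖v‖ := by
  have h := abs_real_inner_le_norm (EuclideanSpace.single i (1 : ℝ)) v
  rw [EuclideanSpace.inner_single_left] at h
  simpa [EuclideanSpace.norm_single] using h

lemma opNorm_le_of_single_abs_le {p : ℕ} (T : EuclideanSpace ℝ (Fin p) →L[ℝ] ℝ) {C : ℝ}
    (h : ∀ i, |T (EuclideanSpace.single i 1)| ≤ C) : ‖T‖ ≤ p * C := by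
  have hC0 : 0 ≤ (p : ℝ) * C := by
    rcases Nat.eq_zero_or_pos p with hp | hp
    · simp [hp]
    · have hC : 0 ≤ C := (abs_nonneg _).trans (h ⟨0, hp⟩)
      positivity
  refine T.opNorm_le_bound hC0 fun v => ?_
  have hv : v = ∑ i, v i • EuclideanSpace.single i (1 : ℝ) := by
    have h2 := (EuclideanSpace.basisFun (Fin p) ℝ).sum_repr v
    simp only [EuclideanSpace.basisFun_repr, EuclideanSpace.basisFun_apply] at h2
    exact h2.symm
  have hTv : T v = ∑ i, v i * T (EuclideanSpace.single i 1) := by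
    conv_lhs => rw [hv]
    rw [map_sum]
    simp [smul_eq_mul]
  rw [Real.norm_eq_abs, hTv]
  calc |∑ i, v i * T (EuclideanSpace.single i 1)|
      ≤ ∑ i, |v i * T (EuclideanSpace.single i 1)| := Finset.abs_sum_le_sum_abs _ _
    _ ≤ ∑ _i : Fin p, ‖v‖ * C := by
        refine Finset.sum_le_sum fun i _ => ?_
        rw [abs_mul]
        exact mul_le_mul (euclid_coord_abs_le v i) (h i) (abs_nonneg _) (norm_nonneg _)
    _ = p * C * ‖v‖ := by
        rw [Finset.sum_const, Finset.card_univ, Fintype.card_fin, nsmul_eq_mul]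
        ring


/-- Lemma 6: if the centered likelihoods `D_n(ω,θ) = 𝓛_n(ω,θ) - E[𝓛_n(·,θ)]` have uniformly
tight suprema of partial derivatives over `Θ` and converge to `0` in probability pointwise in
`θ`, then they converge to `0` in probability uniformly over the compact convex set `Θ`. -/
theorem uniform_convergence_in_probability
    {p : ℕ}
    (Θ : Set (EuclideanSpace ℝ (Fin p)))
    (hne : Θ.Nonempty) (hcomp : IsCompact Θ) (hconv : Convex ℝ Θ)
    {Ω : Type*} [MeasurableSpace Ω] (P : Measure Ω) [IsProbabilityMeasure P]
    (L : ℕ → Ω → EuclideanSpace ℝ (Fin p) → ℝ)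
    -- θ ↦ 𝓛_n(ω,θ) is continuously differentiable on an open convex set containing Θ
    (U : Set (EuclideanSpace ℝ (Fin p))) (hUopen : IsOpen U) (hUconv : Convex ℝ U)
    (hΘU : Θ ⊆ U)
    (hL : ∀ n ω, ContDiffOn ℝ 1 (fun θ => L n ω θ) U)
    -- integrability in ω, and smoothness of the mean function
    (hint : ∀ n θ, Integrable (fun ω => L n ω θ) P)
    (hmean : ∀ n, ContDiffOn ℝ 1 (fun θ => ∫ ω, L n ω θ ∂P) U)
    -- (a) tightness of M_n = sup_{θ ∈ Θ} max_i |∂D_n/∂θ_i(·,θ)|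
    (ha : Tendsto
      (fun M : ℝ => limsup
        (fun n => P {ω | M < sSup {r : ℝ | ∃ θ ∈ Θ, ∃ i : Fin p,
          r = |fderiv ℝ (fun t => L n ω t - ∫ ω', L n ω' t ∂P) θ
                (EuclideanSpace.single i 1)|}})
        atTop)
      atTop (𝓝 (0 : ℝ≥0∞)))
    -- (b) pointwise convergence in probability of D_n(·,θ) to 0
    (hb : ∀ θ ∈ Θ, ∀ ε > (0 : ℝ),
      Tendsto (fun n => P {ω | ε < |L n ω θ - ∫ ω', L n ω' θ ∂P|}) atTop (𝓝 (0 : ℝ≥0∞))) :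
    -- conclusion: sup_{θ ∈ Θ} |D_n(·,θ)| → 0 in probability
    ∀ ε > (0 : ℝ),
      Tendsto
        (fun n => P {ω | ε < sSup {r : ℝ | ∃ θ ∈ Θ,
          r = |L n ω θ - ∫ ω', L n ω' θ ∂P|}})
        atTop (𝓝 (0 : ℝ≥0∞)) := by
  intro ε hε
  rw [ENNReal.tendsto_nhds_zero]
  intro δ hδ
  have hδ2 : (0 : ℝ≥0∞) < δ / 2 := ENNReal.half_pos hδ.ne'
  -- choose M
  obtain ⟨M₀, hM₀⟩ := eventually_atTop.mp (ha.eventually_lt_const hδ2)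
  set M : ℝ := max M₀ 1 with hMdef
  have hM1 : (1 : ℝ) ≤ M := le_max_right _ _
  have hM0 : (0 : ℝ) ≤ M := zero_le_one.trans hM1
  have hMlim := hM₀ M (le_max_left _ _)
  have eventB := eventually_lt_of_limsup_lt hMlim
  -- choose the net radius
  set a : ℝ := (p : ℝ) * M with hadef
  have ha0 : 0 ≤ a := by positivity
  set r : ℝ := ε / (2 * (a + 1)) with hrdef
  have hr : 0 < r := div_pos hε (by positivity)
  -- finite net
  obtain ⟨t, htΘ, htcov⟩ := hcomp.elim_nhds_subcover (fun x => Metric.ball x r)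
    (fun x _ => Metric.ball_mem_nhds x hr)
  -- sum over the net tends to zero
  have hsum : Tendsto
      (fun n => ∑ θj ∈ t, P {ω | ε / 2 < |L n ω θj - ∫ ω', L n ω' θj ∂P|})
      atTop (𝓝 0) := by
    have h2 := tendsto_finset_sum t
      (fun θj hj => hb θj (htΘ θj hj) (ε / 2) (half_pos hε))
    simpa using h2
  have eventC := hsum.eventually_lt_const hδ2
  filter_upwards [eventB, eventC] with n hB hC
  -- key inclusion of events
  have hsub : {ω | ε < sSup {r : ℝ | ∃ θ ∈ Θ, r = |L n ω θ - ∫ ω', L n ω' θ ∂P|}} ⊆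
      {ω | M < sSup {r : ℝ | ∃ θ ∈ Θ, ∃ i : Fin p,
        r = |fderiv ℝ (fun t => L n ω t - ∫ ω', L n ω' t ∂P) θ
              (EuclideanSpace.single i 1)|}}
      ∪ ⋃ θj ∈ t, {ω | ε / 2 < |L n ω θj - ∫ ω', L n ω' θj ∂P|} := by
    intro ω hω
    by_cases hMn : M < sSup {r : ℝ | ∃ θ ∈ Θ, ∃ i : Fin p,
        r = |fderiv ℝ (fun τ => L n ω τ - ∫ ω', L n ω' τ ∂P) θ
              (EuclideanSpace.single i 1)|}
    · exact Or.inl hMn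
    push_neg at hMn
    right
    -- smoothness of D := fun τ => L n ω τ - mean
    have hcd : ContDiffOn ℝ 1 (fun τ => L n ω τ - ∫ ω', L n ω' τ ∂P) U :=
      (hL n ω).sub (hmean n)
    have hdiff : ∀ σ ∈ Θ,
        DifferentiableAt ℝ (fun τ => L n ω τ - ∫ ω', L n ω' τ ∂P) σ := fun σ hσ =>
      (hcd.differentiableOn one_ne_zero).differentiableAt (hUopen.mem_nhds (hΘU hσ))
    -- the derivative set is bounded above
    obtain ⟨B, hBbd⟩ := hcomp.exists_bound_of_continuousOn
      ((hcd.continuousOn_fderiv_of_isOpen hUopen le_rfl).mono hΘU)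
    have hBdd : BddAbove {r : ℝ | ∃ θ ∈ Θ, ∃ i : Fin p,
        r = |fderiv ℝ (fun τ => L n ω τ - ∫ ω', L n ω' τ ∂P) θ
              (EuclideanSpace.single i 1)|} := by
      refine ⟨B, ?_⟩
      rintro s ⟨θ, hθ, i, rfl⟩
      have h1 := (fderiv ℝ (fun τ => L n ω τ - ∫ ω', L n ω' τ ∂P) θ).le_opNorm
        (EuclideanSpace.single i (1 : ℝ))
      rw [EuclideanSpace.norm_single, norm_one, mul_one, Real.norm_eq_abs] at h1
      exact h1.trans (hBbd θ hθ)
    -- pick θ with |D θ| > ε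
    have hne' : Set.Nonempty
        {r : ℝ | ∃ θ ∈ Θ, r = |L n ω θ - ∫ ω', L n ω' θ ∂P|} :=
      ⟨_, hne.choose, hne.choose_spec, rfl⟩
    obtain ⟨s, ⟨θ, hθΘ, rfl⟩, hθgt⟩ := exists_lt_of_lt_csSup hne' hω
    -- pick the net point
    obtain ⟨θj, hjt, hθj⟩ := Set.mem_iUnion₂.mp (htcov hθΘ)
    have hjtΘ : θj ∈ Θ := htΘ θj hjt
    -- uniform bound on the derivative over Θ
    have hnormle : ∀ σ ∈ Θ,
        ‖fderiv ℝ (fun τ => L n ω τ - ∫ ω', L n ω' τ ∂P) σ‖ ≤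
          p * sSup {r : ℝ | ∃ θ ∈ Θ, ∃ i : Fin p,
            r = |fderiv ℝ (fun τ => L n ω τ - ∫ ω', L n ω' τ ∂P) θ
                  (EuclideanSpace.single i 1)|} := fun σ hσ =>
      opNorm_le_of_single_abs_le _ fun i => le_csSup hBdd ⟨σ, hσ, i, rfl⟩
    -- mean value inequality on Θ
    have hmvt := hconv.norm_image_sub_le_of_norm_hasFDerivWithin_le
      (f' := fun σ => fderiv ℝ (fun τ => L n ω τ - ∫ ω', L n ω' τ ∂P) σ)
      (fun σ hσ => ((hdiff σ hσ).hasFDerivAt).hasFDerivWithinAt) hnormle hjtΘ hθΘ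
    -- estimate the Lipschitz move
    have hdist : ‖θ - θj‖ ≤ r := by
      have := Metric.mem_ball.mp hθj
      rw [dist_eq_norm] at this
      exact this.le
    have hMn' : (p : ℝ) * sSup {r : ℝ | ∃ θ ∈ Θ, ∃ i : Fin p,
        r = |fderiv ℝ (fun τ => L n ω τ - ∫ ω', L n ω' τ ∂P) θ
              (EuclideanSpace.single i 1)|} ≤ a := by
      rw [hadef]
      exact mul_le_mul_of_nonneg_left hMn (Nat.cast_nonneg p)
    have hlip : |(L n ω θ - ∫ ω', L n ω' θ ∂P) - (L n ω θj - ∫ ω', L n ω' θj ∂P)| ≤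
        a * r := by
      have h2 : ‖(fun τ => L n ω τ - ∫ ω', L n ω' τ ∂P) θ -
          (fun τ => L n ω τ - ∫ ω', L n ω' τ ∂P) θj‖ ≤ _ := hmvt
      simp only [Real.norm_eq_abs] at h2
      refine h2.trans ?_
      have hd0 : 0 ≤ ‖θ - θj‖ := norm_nonneg _
      calc _ ≤ a * ‖θ - θj‖ := mul_le_mul_of_nonneg_right hMn' hd0
        _ ≤ a * r := mul_le_mul_of_nonneg_left hdist ha0
    have har : a * r ≤ ε / 2 := by
      have h3 : a * r ≤ (a + 1) * r :=
        mul_le_mul_of_nonneg_right (by linarith) hr.le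
      have h4 : (a + 1) * r = ε / 2 := by
        rw [hrdef]
        field_simp
      linarith
    have hθjbig : ε / 2 < |L n ω θj - ∫ ω', L n ω' θj ∂P| := by
      have h5 : |L n ω θ - ∫ ω', L n ω' θ ∂P| - |L n ω θj - ∫ ω', L n ω' θj ∂P| ≤
          |(L n ω θ - ∫ ω', L n ω' θ ∂P) - (L n ω θj - ∫ ω', L n ω' θj ∂P)| :=
        abs_sub_abs_le_abs_sub _ _
      linarith
    exact Set.mem_iUnion₂.mpr ⟨θj, hjt, hθjbig⟩
  calc P {ω | ε < sSup {r : ℝ | ∃ θ ∈ Θ, r = |L n ω θ - ∫ ω', L n ω' θ ∂P|}}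
      ≤ P ({ω | M < sSup {r : ℝ | ∃ θ ∈ Θ, ∃ i : Fin p,
          r = |fderiv ℝ (fun t => L n ω t - ∫ ω', L n ω' t ∂P) θ
                (EuclideanSpace.single i 1)|}}
        ∪ ⋃ θj ∈ t, {ω | ε / 2 < |L n ω θj - ∫ ω', L n ω' θj ∂P|}) :=
      measure_mono hsub
    _ ≤ P {ω | M < sSup {r : ℝ | ∃ θ ∈ Θ, ∃ i : Fin p,
          r = |fderiv ℝ (fun t => L n ω t - ∫ ω', L n ω' t ∂P) θ
                (EuclideanSpace.single i 1)|}}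
        + P (⋃ θj ∈ t, {ω | ε / 2 < |L n ω θj - ∫ ω', L n ω' θj ∂P|}) :=
      measure_union_le _ _
    _ ≤ P {ω | M < sSup {r : ℝ | ∃ θ ∈ Θ, ∃ i : Fin p,
          r = |fderiv ℝ (fun t => L n ω t - ∫ ω', L n ω' t ∂P) θ
                (EuclideanSpace.single i 1)|}}
        + ∑ θj ∈ t, P {ω | ε / 2 < |L n ω θj - ∫ ω', L n ω' θj ∂P|} := by
      gcongr
      exact measure_biUnion_finset_le _ _
    _ ≤ δ / 2 + δ / 2 := add_le_add hB.le hC.le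
    _ = δ := ENNReal.add_halves δ
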